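/- Let g be a Lie algebra over a field k, let n ≥ 2, and let r : g → n_n(k) be a flag homomorphism. Then the commutant C(r) = {A ∈ n_n(k) : A·r(v) = r(v)·A for all v ∈ g} is a k-subspace of n_n(k) satisfying 1 ≤ dim_k C(r) ≤ n − 1. In particular the matrix unit E_{1,n} (with 1 in entry (1,n) and 0 elsewhere) belongs to C(r). (This is the infinitesimal form of the paper's bound 2 ≤ dim Aut(r) ≤ n, since Aut(r) = G_m × exp(C(r)).) -/

import Mathlib

attribute [local instance 100] LieRing.ofAssociativeRing

/-- The commutant `C(r)` of a homomorphism `r : g → n_n(k)` inside the strictly upper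
triangular matrices: the subspace of strictly upper triangular matrices commuting with
every `r v`. -/
def commutant {k : Type*} [Field k] {g : Type*} [LieRing g] [LieAlgebra k g] {n : ℕ}
    (r : g →ₗ⁅k⁆ Matrix (Fin n) (Fin n) k) : Submodule k (Matrix (Fin n) (Fin n) k) where
  carrier := {A | (∀ i j : Fin n, j ≤ i → A i j = 0) ∧ ∀ v : g, A * r v = r v * A}
  add_mem' := by
    rintro A B ⟨hA1, hA2⟩ ⟨hB1, hB2⟩
    refine ⟨fun i j hij => ?_, fun v => ?_⟩
    · simp [Matrix.add_apply, hA1 i j hij, hB1 i j hij]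
    · rw [Matrix.add_mul, Matrix.mul_add, hA2 v, hB2 v]
  zero_mem' := by
    refine ⟨fun i j _ => rfl, fun v => ?_⟩
    rw [Matrix.zero_mul, Matrix.mul_zero]
  smul_mem' := by
    rintro c A ⟨hA1, hA2⟩
    refine ⟨fun i j hij => ?_, fun v => ?_⟩
    · simp [Matrix.smul_apply, hA1 i j hij]
    · rw [Matrix.smul_mul, Matrix.mul_smul, hA2 v]

/-- Key lemma: an element of the commutant whose first row vanishes is zero. -/
theorem commutant_row_zero {k : Type*} [Field k] {g : Type*} [LieRing g] [LieAlgebra k g]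
    {n : ℕ} (hn : 2 ≤ n) (r : g →ₗ⁅k⁆ Matrix (Fin n) (Fin n) k)
    (hr : ∀ (v : g) (i j : Fin n), j ≤ i → r v i j = 0)
    (hflag : ∀ (i : ℕ) (hi : i + 1 < n), ∃ v : g, r v ⟨i, Nat.lt_of_succ_lt hi⟩ ⟨i + 1, hi⟩ ≠ 0)
    (A : Matrix (Fin n) (Fin n) k)
    (hA1 : ∀ i j : Fin n, j ≤ i → A i j = 0)
    (hA2 : ∀ v : g, A * r v = r v * A)
    (h0 : ∀ j : Fin n, A ⟨0, Nat.zero_lt_two.trans_le hn⟩ j = 0) : A = 0 := by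
  have main : ∀ j : ℕ, ∀ hj : j < n, ∀ i : Fin n, A i ⟨j, hj⟩ = 0 := by
    intro j
    induction j using Nat.strong_induction_on with
    | _ j ihj =>
      intro hj
      have inner : ∀ t : ℕ, ∀ i : Fin n, j - (i : ℕ) ≤ t → A i ⟨j, hj⟩ = 0 := by
        intro t
        induction t with
        | zero =>
          intro i hi
          exact hA1 i ⟨j, hj⟩ (by simp only [Fin.le_def]; omega)
        | succ t iht =>
          intro i hi
          by_cases hji : j ≤ (i : ℕ)
          · exact hA1 i ⟨j, hj⟩ (by simp only [Fin.le_def]; omega)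
          by_cases hi0 : (i : ℕ) = 0
          · have : i = (⟨0, by omega⟩ : Fin n) := Fin.ext (by simpa using hi0)
            rw [this]; exact h0 _
          -- now 1 ≤ i < j
          have h1i : 1 ≤ (i : ℕ) := by omega
          have hi1n : ((i : ℕ) - 1) + 1 < n := by omega
          obtain ⟨v, hv⟩ := hflag ((i : ℕ) - 1) hi1n
          set i' : Fin n := ⟨(i : ℕ) - 1, by omega⟩ with hi'
          have heq : (⟨(i : ℕ) - 1 + 1, hi1n⟩ : Fin n) = i := Fin.ext (by simp; omega)
          rw [heq] at hv
          have hrel := congrFun (congrFun (hA2 v) i') ⟨j, hj⟩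
          rw [Matrix.mul_apply, Matrix.mul_apply] at hrel
          have hL : ∑ l, A i' l * r v l ⟨j, hj⟩ = 0 := by
            refine Finset.sum_eq_zero fun l _ => ?_
            by_cases hl : (l : ℕ) < j
            · have h := ihj (l : ℕ) hl l.isLt i'
              rw [Fin.eta] at h
              rw [h, zero_mul]
            · rw [hr v l ⟨j, hj⟩ (by simp only [Fin.le_def]; omega), mul_zero]
          have hR : ∑ l, r v i' l * A l ⟨j, hj⟩ = r v i' i * A i ⟨j, hj⟩ := by
            refine Finset.sum_eq_single i (fun l _ hne => ?_)
              (fun h => absurd (Finset.mem_univ i) h)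
            have hlv : (l : ℕ) ≠ (i : ℕ) := fun h => hne (Fin.ext h)
            rcases lt_or_gt_of_ne hlv with hlt | hgt
            · rw [hr v i' l (by simp only [Fin.le_def, hi']; omega), zero_mul]
            · rw [iht l (by omega), mul_zero]
          rw [hL, hR] at hrel
          exact ((mul_eq_zero.mp hrel.symm).resolve_left hv)
      intro i
      exact inner j i (Nat.sub_le _ _)
  ext i j
  have h := main (j : ℕ) j.isLt i
  rw [Fin.eta] at h
  simpa using h

/-- Let `r : g → n_n(k)` be a flag homomorphism with `n ≥ 2`.  Then the
commutant `C(r)` of `r` in the strictly upper triangular matrices is a subspace of dimension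
between `1` and `n - 1`, and the matrix unit `E_{1,n}` belongs to it. -/
theorem stmt_7 {k : Type*} [Field k] {g : Type*} [LieRing g] [LieAlgebra k g] {n : ℕ}
    (hn : 2 ≤ n)
    (r : g →ₗ⁅k⁆ Matrix (Fin n) (Fin n) k)
    (hr : ∀ (v : g) (i j : Fin n), j ≤ i → r v i j = 0)
    (hflag : ∀ (i : ℕ) (hi : i + 1 < n), ∃ v : g, r v ⟨i, by omega⟩ ⟨i + 1, hi⟩ ≠ 0) :
    1 ≤ Module.finrank k (commutant r) ∧
    Module.finrank k (commutant r) ≤ n - 1 ∧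
    Matrix.single (⟨0, by omega⟩ : Fin n) (⟨n - 1, by omega⟩ : Fin n) (1 : k) ∈
      commutant r := by
  set E : Matrix (Fin n) (Fin n) k :=
    Matrix.single (⟨0, by omega⟩ : Fin n) (⟨n - 1, by omega⟩ : Fin n) (1 : k) with hEdef
  have hE : E ∈ commutant r := by
    refine ⟨fun i j hij => ?_, fun v => ?_⟩
    · simp only [hEdef, Matrix.single, Matrix.of_apply]
      rw [if_neg]
      rintro ⟨rfl, rfl⟩
      simp only [Fin.le_def] at hij
      omega
    · have h1 : E * r v = 0 := by
        ext a b
        rw [Matrix.mul_apply, Matrix.zero_apply]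
        refine Finset.sum_eq_zero fun l _ => ?_
        simp only [hEdef, Matrix.single, Matrix.of_apply]
        split_ifs with h
        · obtain ⟨-, rfl⟩ := h
          rw [one_mul]
          exact hr v _ b (by simp only [Fin.le_def]; omega)
        · rw [zero_mul]
      have h2 : r v * E = 0 := by
        ext a b
        rw [Matrix.mul_apply, Matrix.zero_apply]
        refine Finset.sum_eq_zero fun l _ => ?_
        simp only [hEdef, Matrix.single, Matrix.of_apply]
        split_ifs with h
        · obtain ⟨rfl, -⟩ := h
          rw [mul_one]
          exact hr v a _ (by simp only [Fin.le_def]; omega)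
        · rw [mul_zero]
      rw [h1, h2]
  have hEne : E ≠ 0 := by
    intro h
    have := congrFun (congrFun h ⟨0, by omega⟩) ⟨n - 1, by omega⟩
    simp only [hEdef, Matrix.single, Matrix.of_apply, and_self, if_true,
      Matrix.zero_apply] at this
    exact one_ne_zero this
  haveI : Nontrivial (commutant r) := by
    refine ⟨⟨E, hE⟩, 0, fun h => hEne ?_⟩
    exact congrArg Subtype.val h
  refine ⟨Module.finrank_pos, ?_, hE⟩
  -- the map "first row" is injective on the commutant
  let φ : commutant r →ₗ[k] (Fin (n - 1) → k) :=
    { toFun := fun A => fun j => (A : Matrix (Fin n) (Fin n) k) ⟨0, by omega⟩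
        ⟨(j : ℕ) + 1, by omega⟩
      map_add' := fun A B => rfl
      map_smul' := fun c A => rfl }
  have hker : ∀ A : commutant r, φ A = 0 → A = 0 := by
    rintro ⟨A, hA1, hA2⟩ hA0
    have h0 : ∀ j : Fin n, A ⟨0, by omega⟩ j = 0 := by
      intro j
      by_cases hj : (j : ℕ) = 0
      · exact hA1 _ j (by simp only [Fin.le_def]; omega)
      · have := congrFun hA0 ⟨(j : ℕ) - 1, by omega⟩
        simp only [φ, LinearMap.coe_mk, AddHom.coe_mk, Pi.zero_apply] at this
        change A ⟨0, by omega⟩ ⟨(j : ℕ) - 1 + 1, by omega⟩ = 0 at this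
        have hjj : (⟨(j : ℕ) - 1 + 1, by omega⟩ : Fin n) = j := Fin.ext (by simp; omega)
        rwa [hjj] at this
    have := commutant_row_zero hn r hr hflag A hA1 hA2 h0
    exact Subtype.ext this
  have hinj : Function.Injective φ := by
    rw [← LinearMap.ker_eq_bot, LinearMap.ker_eq_bot']
    exact fun m hm => hker m hm
  calc Module.finrank k (commutant r) ≤ Module.finrank k (Fin (n - 1) → k) :=
        LinearMap.finrank_le_finrank_of_injective hinj
    _ = n - 1 := Module.finrank_fin_fun k
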